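/- arXiv:2407.09821 — 4 statements merged into one kernel-verified Lean document; each statement's English description precedes it below -/
import Mathlib

section
/- Let k₀, k₁, m₀, m₁, g₀, g₁ ∈ ℂ and set p(X) = k₀ + k₁X, q(X) = m₀ + m₁X, w(X) = g₀ + g₁X. Assume the coefficient of X^r in (p² + q² + w²)² vanishes for r = 0 and r = 1. Let D ⊆ ℂ be open, F : ℂ → ℂ holomorphic on D, ξ_r(x,y,z) = k_r x + m_r y + g_r z for r = 0, 1, and Π = {(x,y,z) ∈ ℝ³ : ξ₀(x,y,z) ∈ D}. Then the function U₁(x,y,z) = ξ₁(x,y,z)·F′(ξ₀(x,y,z)) satisfies the three-dimensional biharmonic equation Δ²U₁ = 0 at every point of Π. -/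
open Polynomial

/-- Partial derivative in the first variable. -/
noncomputable def pdx (U : ℝ → ℝ → ℝ → ℂ) : ℝ → ℝ → ℝ → ℂ :=
  fun x y z => deriv (fun s => U s y z) x

/-- Partial derivative in the second variable. -/
noncomputable def pdy (U : ℝ → ℝ → ℝ → ℂ) : ℝ → ℝ → ℝ → ℂ :=
  fun x y z => deriv (fun s => U x s z) y

/-- Partial derivative in the third variable. -/
noncomputable def pdz (U : ℝ → ℝ → ℝ → ℂ) : ℝ → ℝ → ℝ → ℂ :=
  fun x y z => deriv (fun s => U x y s) z

/-- The three-dimensional biharmonic operator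
`Δ²U = U_xxxx + U_yyyy + U_zzzz + 2U_xxyy + 2U_xxzz + 2U_yyzz`. -/
noncomputable def biharm (U : ℝ → ℝ → ℝ → ℂ) : ℝ → ℝ → ℝ → ℂ :=
  fun x y z =>
    pdx (pdx (pdx (pdx U))) x y z + pdy (pdy (pdy (pdy U))) x y z +
      pdz (pdz (pdz (pdz U))) x y z +
      2 * pdx (pdx (pdy (pdy U))) x y z +
      2 * pdx (pdx (pdz (pdz U))) x y z +
      2 * pdy (pdy (pdz (pdz U))) x y z


open Polynomial

lemma Fn_hasDerivAt {D : Set ℂ} (hD : IsOpen D) {F : ℂ → ℂ}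
    (hF : DifferentiableOn ℂ F D) (n : ℕ) {w : ℂ} (hw : w ∈ D) :
    HasDerivAt (deriv^[n] F) (deriv^[n+1] F w) w := by
  have hA : ∀ n : ℕ, AnalyticOnNhd ℂ (deriv^[n] F) D := by
    intro n
    induction n with
    | zero => simpa using hF.analyticOnNhd hD
    | succ n ih =>
      rw [Function.iterate_succ_apply']
      exact ih.deriv
  have hd := ((hA n) w hw).differentiableAt
  have he : deriv (deriv^[n] F) w = deriv^[n+1] F w := by
    rw [Function.iterate_succ_apply']
  exact he ▸ hd.hasDerivAt

lemma slice_deriv {Fn Fn1 Fn2 : ℂ → ℂ} {w : ℂ}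
    (h1 : HasDerivAt Fn (Fn1 w) w) (h2 : HasDerivAt Fn1 (Fn2 w) w)
    (a A u v c d : ℂ) (t : ℝ) (hw : a * t + u = w) :
    HasDerivAt (fun s : ℝ => c * Fn (a * s + u) + d * (A * s + v) * Fn1 (a * s + u))
      ((c * a + d * A) * Fn1 w + d * a * (A * t + v) * Fn2 w) t := by
  subst hw
  have hlin : HasDerivAt (fun s : ℝ => a * (s : ℂ) + u) a t := by
    have : HasDerivAt (fun zz : ℂ => a * zz + u) a (t : ℂ) := by
      simpa using ((hasDerivAt_id ((t : ℝ) : ℂ)).const_mul a).add_const u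
    exact this.comp_ofReal
  have hG1 : HasDerivAt (fun s : ℝ => Fn (a * s + u)) (Fn1 (a * (t:ℝ) + u) * a) t := by
    have hc : HasDerivAt (fun zz : ℂ => Fn (a * zz + u)) (Fn1 (a * (t:ℝ) + u) * a) (t : ℂ) := by
      have hl : HasDerivAt (fun zz : ℂ => a * zz + u) a (t : ℂ) := by
        simpa using ((hasDerivAt_id ((t : ℝ) : ℂ)).const_mul a).add_const u
      have := HasDerivAt.comp ((t : ℝ) : ℂ) h1 hl
      exact this
    exact hc.comp_ofReal
  have hG2 : HasDerivAt (fun s : ℝ => Fn1 (a * s + u)) (Fn2 (a * (t:ℝ) + u) * a) t := by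
    have hc : HasDerivAt (fun zz : ℂ => Fn1 (a * zz + u)) (Fn2 (a * (t:ℝ) + u) * a) (t : ℂ) := by
      have hl : HasDerivAt (fun zz : ℂ => a * zz + u) a (t : ℂ) := by
        simpa using ((hasDerivAt_id ((t : ℝ) : ℂ)).const_mul a).add_const u
      have := HasDerivAt.comp ((t : ℝ) : ℂ) h2 hl
      exact this
    exact hc.comp_ofReal
  have hfst : HasDerivAt (fun s : ℝ => c * Fn (a * s + u)) (c * (Fn1 (a * (t:ℝ) + u) * a)) t :=
    hG1.const_mul c
  have hl2 : HasDerivAt (fun s : ℝ => d * (A * (s : ℂ) + v)) (d * A) t := by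
    have : HasDerivAt (fun zz : ℂ => d * (A * zz + v)) (d * A) (t : ℂ) := by
      simpa [mul_assoc] using (((hasDerivAt_id ((t : ℝ) : ℂ)).const_mul A).add_const v).const_mul d
    exact this.comp_ofReal
  have hsnd := hl2.mul hG2
  have := hfst.add hsnd
  refine this.congr_deriv ?_
  ring

/-- The family of functions closed under partial differentiation. -/
noncomputable def Wfun (F : ℂ → ℂ) (k m g : ℕ → ℂ) (c d : ℂ) (n : ℕ) :
    ℝ → ℝ → ℝ → ℂ :=
  fun x y z => c * deriv^[n] F (k 0 * x + m 0 * y + g 0 * z) +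
    d * (k 1 * x + m 1 * y + g 1 * z) * deriv^[n+1] F (k 0 * x + m 0 * y + g 0 * z)

section Steps

variable {D : Set ℂ} (hD : IsOpen D) {F : ℂ → ℂ} (hF : DifferentiableOn ℂ F D)
  (k m g : ℕ → ℂ) (c d : ℂ) (n : ℕ) (x y z : ℝ)

include hD hF

lemma step_x (h : k 0 * x + m 0 * y + g 0 * z ∈ D) :
    pdx (Wfun F k m g c d n) x y z =
      Wfun F k m g (c * k 0 + d * k 1) (d * k 0) (n+1) x y z := by
  have hs := slice_deriv (Fn_hasDerivAt hD hF n h) (Fn_hasDerivAt hD hF (n+1) h)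
    (k 0) (k 1) (m 0 * y + g 0 * z) (m 1 * y + g 1 * z) c d x (by ring)
  have he : (fun s : ℝ => Wfun F k m g c d n s y z) =
      (fun s : ℝ => c * deriv^[n] F (k 0 * s + (m 0 * y + g 0 * z)) +
        d * (k 1 * s + (m 1 * y + g 1 * z)) * deriv^[n+1] F (k 0 * s + (m 0 * y + g 0 * z))) := by
    funext s; simp only [Wfun]; ring_nf
  have : pdx (Wfun F k m g c d n) x y z =
      (c * k 0 + d * k 1) * deriv^[n+1] F (k 0 * x + m 0 * y + g 0 * z) +
        d * k 0 * (k 1 * x + (m 1 * y + g 1 * z)) *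
          deriv^[n+1+1] F (k 0 * x + m 0 * y + g 0 * z) := by
    show deriv (fun s : ℝ => Wfun F k m g c d n s y z) x = _
    rw [he]
    exact hs.deriv
  rw [this]; simp only [Wfun]; ring_nf

lemma step_y (h : k 0 * x + m 0 * y + g 0 * z ∈ D) :
    pdy (Wfun F k m g c d n) x y z =
      Wfun F k m g (c * m 0 + d * m 1) (d * m 0) (n+1) x y z := by
  have h' : m 0 * y + (k 0 * x + g 0 * z) ∈ D := by
    have : m 0 * (y:ℂ) + (k 0 * x + g 0 * z) = k 0 * x + m 0 * y + g 0 * z := by ring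
    rw [this]; exact h
  have hs := slice_deriv (Fn_hasDerivAt hD hF n h') (Fn_hasDerivAt hD hF (n+1) h')
    (m 0) (m 1) (k 0 * x + g 0 * z) (k 1 * x + g 1 * z) c d y rfl
  have he : (fun s : ℝ => Wfun F k m g c d n x s z) =
      (fun s : ℝ => c * deriv^[n] F (m 0 * s + (k 0 * x + g 0 * z)) +
        d * (m 1 * s + (k 1 * x + g 1 * z)) * deriv^[n+1] F (m 0 * s + (k 0 * x + g 0 * z))) := by
    funext s; simp only [Wfun]; ring_nf
  have : pdy (Wfun F k m g c d n) x y z =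
      (c * m 0 + d * m 1) * deriv^[n+1] F (m 0 * y + (k 0 * x + g 0 * z)) +
        d * m 0 * (m 1 * y + (k 1 * x + g 1 * z)) *
          deriv^[n+1+1] F (m 0 * y + (k 0 * x + g 0 * z)) := by
    show deriv (fun s : ℝ => Wfun F k m g c d n x s z) y = _
    rw [he]
    exact hs.deriv
  rw [this]; simp only [Wfun]; ring_nf

lemma step_z (h : k 0 * x + m 0 * y + g 0 * z ∈ D) :
    pdz (Wfun F k m g c d n) x y z =
      Wfun F k m g (c * g 0 + d * g 1) (d * g 0) (n+1) x y z := by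
  have h' : g 0 * z + (k 0 * x + m 0 * y) ∈ D := by
    have : g 0 * (z:ℂ) + (k 0 * x + m 0 * y) = k 0 * x + m 0 * y + g 0 * z := by ring
    rw [this]; exact h
  have hs := slice_deriv (Fn_hasDerivAt hD hF n h') (Fn_hasDerivAt hD hF (n+1) h')
    (g 0) (g 1) (k 0 * x + m 0 * y) (k 1 * x + m 1 * y) c d z rfl
  have he : (fun s : ℝ => Wfun F k m g c d n x y s) =
      (fun s : ℝ => c * deriv^[n] F (g 0 * s + (k 0 * x + m 0 * y)) +
        d * (g 1 * s + (k 1 * x + m 1 * y)) * deriv^[n+1] F (g 0 * s + (k 0 * x + m 0 * y))) := by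
    funext s; simp only [Wfun]; ring_nf
  have : pdz (Wfun F k m g c d n) x y z =
      (c * g 0 + d * g 1) * deriv^[n+1] F (g 0 * z + (k 0 * x + m 0 * y)) +
        d * g 0 * (g 1 * z + (k 1 * x + m 1 * y)) *
          deriv^[n+1+1] F (g 0 * z + (k 0 * x + m 0 * y)) := by
    show deriv (fun s : ℝ => Wfun F k m g c d n x y s) z = _
    rw [he]
    exact hs.deriv
  rw [this]; simp only [Wfun]; ring_nf

end Steps

section Congr

variable {D : Set ℂ} (hD : IsOpen D) (k m g : ℕ → ℂ) {U V : ℝ → ℝ → ℝ → ℂ}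
  (h : ∀ x y z : ℝ, k 0 * x + m 0 * y + g 0 * z ∈ D → U x y z = V x y z)
  (x y z : ℝ) (hp : k 0 * x + m 0 * y + g 0 * z ∈ D)

include hD h hp

lemma pdx_congr : pdx U x y z = pdx V x y z := by
  unfold pdx
  apply Filter.EventuallyEq.deriv_eq
  have hopen : IsOpen {s : ℝ | k 0 * s + m 0 * y + g 0 * z ∈ D} := by
    apply hD.preimage (f := fun s : ℝ => k 0 * s + m 0 * y + g 0 * z)
    fun_prop
  filter_upwards [hopen.mem_nhds hp] with s hs using h s y z hs

lemma pdy_congr : pdy U x y z = pdy V x y z := by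
  unfold pdy
  apply Filter.EventuallyEq.deriv_eq
  have hopen : IsOpen {s : ℝ | k 0 * x + m 0 * s + g 0 * z ∈ D} := by
    apply hD.preimage (f := fun s : ℝ => k 0 * x + m 0 * s + g 0 * z)
    fun_prop
  filter_upwards [hopen.mem_nhds hp] with s hs using h x s z hs

lemma pdz_congr : pdz U x y z = pdz V x y z := by
  unfold pdz
  apply Filter.EventuallyEq.deriv_eq
  have hopen : IsOpen {s : ℝ | k 0 * x + m 0 * y + g 0 * s ∈ D} := by
    apply hD.preimage (f := fun s : ℝ => k 0 * x + m 0 * y + g 0 * s)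
    fun_prop
  filter_upwards [hopen.mem_nhds hp] with s hs using h x y s hs

end Congr

section Lifts

variable {D : Set ℂ} (hD : IsOpen D) {F : ℂ → ℂ} (hF : DifferentiableOn ℂ F D)
  (k m g : ℕ → ℂ) {Q : ℝ → ℝ → ℝ → ℂ} {c d : ℂ} {n : ℕ}
  (hQ : ∀ x y z : ℝ, k 0 * x + m 0 * y + g 0 * z ∈ D →
    Q x y z = Wfun F k m g c d n x y z)

include hD hF hQ

lemma lift_x : ∀ x y z : ℝ, k 0 * x + m 0 * y + g 0 * z ∈ D →
    pdx Q x y z = Wfun F k m g (c * k 0 + d * k 1) (d * k 0) (n+1) x y z :=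
  fun x y z h =>
    (pdx_congr hD k m g hQ x y z h).trans (step_x hD hF k m g c d n x y z h)

lemma lift_y : ∀ x y z : ℝ, k 0 * x + m 0 * y + g 0 * z ∈ D →
    pdy Q x y z = Wfun F k m g (c * m 0 + d * m 1) (d * m 0) (n+1) x y z :=
  fun x y z h =>
    (pdy_congr hD k m g hQ x y z h).trans (step_y hD hF k m g c d n x y z h)

lemma lift_z : ∀ x y z : ℝ, k 0 * x + m 0 * y + g 0 * z ∈ D →
    pdz Q x y z = Wfun F k m g (c * g 0 + d * g 1) (d * g 0) (n+1) x y z :=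
  fun x y z h =>
    (pdz_congr hD k m g hQ x y z h).trans (step_z hD hF k m g c d n x y z h)

end Lifts

/-- If the coefficients of `X^r`, `r = 0, 1`, in `(p² + q² + w²)²` vanish (with `p, q, w` the degree-1 polynomials with coefficients `k, m, g`) and `F` is holomorphic on the open set `D`, then `U₁ = ξ₁·F′(ξ₀)` satisfies `Δ²U₁ = 0` on `Π`. -/
theorem biharmonic_U1 (k m g : ℕ → ℂ)
    (hcoef : ∀ r < 2,
      (((∑ r ∈ Finset.range 2, C (k r) * X ^ r) ^ 2 +
          (∑ r ∈ Finset.range 2, C (m r) * X ^ r) ^ 2 +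
          (∑ r ∈ Finset.range 2, C (g r) * X ^ r) ^ 2) ^ 2 : Polynomial ℂ).coeff r = 0)
    (D : Set ℂ) (hD : IsOpen D) (F : ℂ → ℂ) (hF : DifferentiableOn ℂ F D)
    (x y z : ℝ) (hmem : k 0 * (x : ℂ) + m 0 * (y : ℂ) + g 0 * (z : ℂ) ∈ D) :
    biharm (fun x y z =>
      (k 1 * (x : ℂ) + m 1 * (y : ℂ) + g 1 * (z : ℂ)) * deriv F (k 0 * (x : ℂ) + m 0 * (y : ℂ) + g 0 * (z : ℂ))) x y z = 0 := by
  have hU : (fun x y z : ℝ =>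
      (k 1 * (x : ℂ) + m 1 * (y : ℂ) + g 1 * (z : ℂ)) *
        deriv F (k 0 * (x : ℂ) + m 0 * (y : ℂ) + g 0 * (z : ℂ))) = Wfun F k m g 0 1 0 := by
    funext a b c
    simp [Wfun]
  rw [hU]
  have base : ∀ x y z : ℝ, k 0 * x + m 0 * y + g 0 * z ∈ D →
      Wfun F k m g 0 1 0 x y z = Wfun F k m g 0 1 0 x y z := fun _ _ _ _ => rfl
  have hx4 := lift_x hD hF k m g (lift_x hD hF k m g (lift_x hD hF k m g
    (lift_x hD hF k m g base)))
  have hy4 := lift_y hD hF k m g (lift_y hD hF k m g (lift_y hD hF k m g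
    (lift_y hD hF k m g base)))
  have hz4 := lift_z hD hF k m g (lift_z hD hF k m g (lift_z hD hF k m g
    (lift_z hD hF k m g base)))
  have hxxyy := lift_x hD hF k m g (lift_x hD hF k m g (lift_y hD hF k m g
    (lift_y hD hF k m g base)))
  have hxxzz := lift_x hD hF k m g (lift_x hD hF k m g (lift_z hD hF k m g
    (lift_z hD hF k m g base)))
  have hyyzz := lift_y hD hF k m g (lift_y hD hF k m g (lift_z hD hF k m g
    (lift_z hD hF k m g base)))
  have h0 := hcoef 0 (by norm_num)
  have hP : ((∑ r ∈ Finset.range 2, C (k r) * X ^ r) ^ 2 +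
          (∑ r ∈ Finset.range 2, C (m r) * X ^ r) ^ 2 +
          (∑ r ∈ Finset.range 2, C (g r) * X ^ r) ^ 2) ^ 2 =
      C ((k 0 ^ 2 + m 0 ^ 2 + g 0 ^ 2) ^ 2) +
      C (4 * (k 0 ^ 2 + m 0 ^ 2 + g 0 ^ 2) * (k 0 * k 1 + m 0 * m 1 + g 0 * g 1)) * X +
      (C (2 * (k 0 ^ 2 + m 0 ^ 2 + g 0 ^ 2) * (k 1 ^ 2 + m 1 ^ 2 + g 1 ^ 2) +
          4 * (k 0 * k 1 + m 0 * m 1 + g 0 * g 1) ^ 2)) * X ^ 2 +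
      C (4 * (k 1 ^ 2 + m 1 ^ 2 + g 1 ^ 2) * (k 0 * k 1 + m 0 * m 1 + g 0 * g 1)) * X ^ 3 +
      C ((k 1 ^ 2 + m 1 ^ 2 + g 1 ^ 2) ^ 2) * X ^ 4 := by
    simp only [Finset.sum_range_succ, Finset.sum_range_one, pow_zero, mul_one, pow_one]
    simp only [map_add, map_mul, map_pow, map_ofNat]
    ring
  rw [hP] at h0
  simp only [coeff_add, coeff_C_mul, coeff_X_pow, coeff_C, coeff_X_zero, coeff_X_one] at h0
  norm_num at h0
  simp only [biharm]
  rw [hx4 x y z hmem, hy4 x y z hmem, hz4 x y z hmem, hxxyy x y z hmem,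
    hxxzz x y z hmem, hyyzz x y z hmem]
  simp only [Wfun]
  linear_combination (4 * (k 0 * k 1 + m 0 * m 1 + g 0 * g 1) *
      deriv^[0+1+1+1+1] F (k 0 * x + m 0 * y + g 0 * z) +
    (k 0 ^ 2 + m 0 ^ 2 + g 0 ^ 2) * (k 1 * x + m 1 * y + g 1 * z) *
      deriv^[0+1+1+1+1+1] F (k 0 * x + m 0 * y + g 0 * z)) * h0
end

section
/- Let k_r, m_r, g_r ∈ ℂ for r = 0, 1, 2 and set p(X) = Σ_{r=0}^{2} k_rX^r, q(X) = Σ_{r=0}^{2} m_rX^r, w(X) = Σ_{r=0}^{2} g_rX^r. Assume the coefficient of X^r in (p² + q² + w²)² vanishes for r = 0, 1, 2. Let D ⊆ ℂ be open, F : ℂ → ℂ holomorphic on D, ξ_r(x,y,z) = k_r x + m_r y + g_r z, and Π = {(x,y,z) ∈ ℝ³ : ξ₀(x,y,z) ∈ D}. Then the function U₂ = ξ₂·F′(ξ₀) + (ξ₁²/2)·F″(ξ₀) satisfies the three-dimensional biharmonic equation Δ²U₂ = 0 at every point of Π. -/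
open Polynomial

lemma cm1 (p q : Polynomial ℂ) : (p*q).coeff 1 = p.coeff 0 * q.coeff 1 + p.coeff 1 * q.coeff 0 := by
  rw [coeff_mul, Finset.Nat.sum_antidiagonal_eq_sum_range_succ_mk]
  simp [Finset.sum_range_succ]
lemma cm2 (p q : Polynomial ℂ) : (p*q).coeff 2 = p.coeff 0 * q.coeff 2 + p.coeff 1 * q.coeff 1 + p.coeff 2 * q.coeff 0 := by
  rw [coeff_mul, Finset.Nat.sum_antidiagonal_eq_sum_range_succ_mk]
  simp [Finset.sum_range_succ]

lemma coefAB (k m g : ℕ → ℂ)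
    (hcoef : ∀ r < 3,
      (((∑ r ∈ Finset.range 3, C (k r) * X ^ r) ^ 2 +
          (∑ r ∈ Finset.range 3, C (m r) * X ^ r) ^ 2 +
          (∑ r ∈ Finset.range 3, C (g r) * X ^ r) ^ 2) ^ 2 : Polynomial ℂ).coeff r = 0) :
    k 0 ^2 + m 0^2 + g 0^2 = 0 ∧ k 0*k 1 + m 0*m 1 + g 0*g 1 = 0 := by
  have h0 := hcoef 0 (by norm_num)
  have h2 := hcoef 2 (by norm_num)
  set P : Polynomial ℂ := (∑ r ∈ Finset.range 3, C (k r) * X ^ r) ^ 2 +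
          (∑ r ∈ Finset.range 3, C (m r) * X ^ r) ^ 2 +
          (∑ r ∈ Finset.range 3, C (g r) * X ^ r) ^ 2 with hP
  have hP0 : P.coeff 0 = k 0^2 + m 0^2 + g 0^2 := by
    simp [hP, pow_two, Finset.sum_range_succ, mul_coeff_zero]
  have hP1 : P.coeff 1 = 2*(k 0*k 1 + m 0*m 1 + g 0*g 1) := by
    simp only [hP, pow_two, coeff_add, cm1, Finset.sum_range_succ]
    simp [Finset.sum_range_succ, coeff_one]; ring
  have e0 : (P^2).coeff 0 = (P.coeff 0)^2 := by rw [pow_two, mul_coeff_zero]; ring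
  have e2 : (P^2).coeff 2 = 2*P.coeff 0*P.coeff 2 + (P.coeff 1)^2 := by rw [pow_two, cm2]; ring
  rw [e0, hP0] at h0
  have hA : k 0 ^2 + m 0^2 + g 0^2 = 0 := pow_eq_zero_iff (by norm_num) |>.mp h0
  refine ⟨hA, ?_⟩
  rw [e2, hP0, hA, hP1] at h2
  simp only [mul_zero, zero_mul, zero_add] at h2
  have := pow_eq_zero_iff (n := 2) (by norm_num) |>.mp h2


  linear_combination this / 2

/-- term (n, a, b, c, d) means (a + b·ξ₁ + c·ξ₂ + d·ξ₁²)·F⁽ⁿ⁾(ξ₀) -/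
abbrev Trm := ℕ × ℂ × ℂ × ℂ × ℂ

noncomputable def itp (F : ℂ → ℂ) (k m g : ℕ → ℂ) : List Trm → ℝ → ℝ → ℝ → ℂ
  | [] => fun _ _ _ => 0
  | t :: L => fun x y z =>
      (t.2.1 + t.2.2.1 * (k 1*x + m 1*y + g 1*z) + t.2.2.2.1 * (k 2*x + m 2*y + g 2*z)
        + t.2.2.2.2 * ((k 1*x + m 1*y + g 1*z) * (k 1*x + m 1*y + g 1*z))) *
          iteratedDeriv t.1 F (k 0*x + m 0*y + g 0*z)
      + itp F k m g L x y z

def stepT (u : ℕ → ℂ) (t : Trm) : List Trm :=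
  [(t.1, t.2.2.1 * u 1 + t.2.2.2.1 * u 2, 2 * t.2.2.2.2 * u 1, 0, 0),
   (t.1 + 1, u 0 * t.2.1, u 0 * t.2.2.1, u 0 * t.2.2.2.1, u 0 * t.2.2.2.2)]

def stepL (u : ℕ → ℂ) : List Trm → List Trm
  | [] => []
  | t :: L => stepT u t ++ stepL u L

lemma itp_append (F : ℂ → ℂ) (k m g : ℕ → ℂ) (L1 L2 : List Trm) (x y z : ℝ) :
    itp F k m g (L1 ++ L2) x y z = itp F k m g L1 x y z + itp F k m g L2 x y z := by
  induction L1 with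
  | nil => simp [itp]
  | cons t L ih =>
    simp only [List.cons_append, itp, List.append_eq, ih]; ring

lemma hasDeriv_itp (F : ℂ → ℂ) (D : Set ℂ)
    (hG : ∀ n w, w ∈ D → HasDerivAt (iteratedDeriv n F) (iteratedDeriv (n+1) F w) w)
    (k m g : ℕ → ℂ) (L : List Trm) (x y z : ℝ) (h : k 0*(x:ℂ) + m 0*(y:ℂ) + g 0*(z:ℂ) ∈ D) :
    HasDerivAt (fun s : ℝ => itp F k m g L s y z) (itp F k m g (stepL k L) x y z) x := by
  induction L with
  | nil => simpa [itp, stepL] using hasDerivAt_const x (0:ℂ)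
  | cons t L ih =>
    have hs : HasDerivAt (fun s : ℝ => (s:ℂ)) 1 x := by
      simpa using (hasDerivAt_id x).ofReal_comp
    have hxi : ∀ j : ℕ, HasDerivAt (fun s : ℝ => k j*(s:ℂ) + m j*(y:ℂ) + g j*(z:ℂ)) (k j) x := by
      intro j
      simpa using ((hs.const_mul (k j)).add_const (m j*(y:ℂ))).add_const (g j*(z:ℂ))
    have hinC : HasDerivAt (fun w : ℂ => k 0*w + m 0*(y:ℂ) + g 0*(z:ℂ)) (k 0) (x:ℂ) := by
      simpa using (((hasDerivAt_id ((x:ℂ))).const_mul (k 0)).add_const (m 0*(y:ℂ))).add_const (g 0*(z:ℂ))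
    have hcomp : HasDerivAt (fun s : ℝ => iteratedDeriv t.1 F (k 0*(s:ℂ) + m 0*(y:ℂ) + g 0*(z:ℂ)))
        (iteratedDeriv (t.1+1) F (k 0*(x:ℂ) + m 0*(y:ℂ) + g 0*(z:ℂ)) * k 0) x := by
      have := ((hG t.1 _ h).comp ((x:ℂ)) hinC).comp_ofReal
      simpa [Function.comp] using this
    have hlin := (((hxi 1).const_mul t.2.2.1).const_add t.2.1).add ((hxi 2).const_mul t.2.2.2.1)
      |>.add (((hxi 1).mul (hxi 1)).const_mul t.2.2.2.2)
    have hsum := (hlin.mul hcomp).add ih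
    simp only [itp]
    refine hsum.congr_deriv (Eq.symm ?_)
    show itp F k m g (stepL k (t :: L)) x y z = _
    rw [show stepL k (t :: L) = stepT k t ++ stepL k L from rfl, itp_append]
    simp only [stepT, itp, Pi.add_apply, Pi.mul_apply]
    ring

lemma itp_swapxy (F : ℂ → ℂ) (k m g : ℕ → ℂ) (L : List Trm) (x y z : ℝ) :
    itp F k m g L x y z = itp F m k g L y x z := by
  induction L with
  | nil => rfl
  | cons t L ih =>
    simp only [itp, ih]
    rw [show m 0*(y:ℂ) + k 0*(x:ℂ) + g 0*(z:ℂ) = k 0*(x:ℂ) + m 0*(y:ℂ) + g 0*(z:ℂ) from by ring]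
    ring

lemma itp_swapxz (F : ℂ → ℂ) (k m g : ℕ → ℂ) (L : List Trm) (x y z : ℝ) :
    itp F k m g L x y z = itp F g m k L z y x := by
  induction L with
  | nil => rfl
  | cons t L ih =>
    simp only [itp, ih]
    rw [show g 0*(z:ℂ) + m 0*(y:ℂ) + k 0*(x:ℂ) = k 0*(x:ℂ) + m 0*(y:ℂ) + g 0*(z:ℂ) from by ring]
    ring

lemma pdx_itp (F : ℂ → ℂ) (D : Set ℂ)
    (hG : ∀ n w, w ∈ D → HasDerivAt (iteratedDeriv n F) (iteratedDeriv (n+1) F w) w)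
    (k m g : ℕ → ℂ) (L : List Trm) (x y z : ℝ) (h : k 0*(x:ℂ) + m 0*(y:ℂ) + g 0*(z:ℂ) ∈ D) :
    pdx (itp F k m g L) x y z = itp F k m g (stepL k L) x y z :=
  (hasDeriv_itp F D hG k m g L x y z h).deriv

lemma pdy_itp (F : ℂ → ℂ) (D : Set ℂ)
    (hG : ∀ n w, w ∈ D → HasDerivAt (iteratedDeriv n F) (iteratedDeriv (n+1) F w) w)
    (k m g : ℕ → ℂ) (L : List Trm) (x y z : ℝ) (h : k 0*(x:ℂ) + m 0*(y:ℂ) + g 0*(z:ℂ) ∈ D) :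
    pdy (itp F k m g L) x y z = itp F k m g (stepL m L) x y z := by
  have h' : m 0*(y:ℂ) + k 0*(x:ℂ) + g 0*(z:ℂ) ∈ D := by
    rwa [show m 0*(y:ℂ) + k 0*(x:ℂ) + g 0*(z:ℂ) = k 0*(x:ℂ) + m 0*(y:ℂ) + g 0*(z:ℂ) from by ring]
  have : pdy (itp F k m g L) x y z = pdx (itp F m k g L) y x z := by
    unfold pdx pdy
    congr 1
    funext s
    exact itp_swapxy F k m g L x s z
  rw [this, pdx_itp F D hG m k g L y x z h', ← itp_swapxy]

lemma pdz_itp (F : ℂ → ℂ) (D : Set ℂ)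
    (hG : ∀ n w, w ∈ D → HasDerivAt (iteratedDeriv n F) (iteratedDeriv (n+1) F w) w)
    (k m g : ℕ → ℂ) (L : List Trm) (x y z : ℝ) (h : k 0*(x:ℂ) + m 0*(y:ℂ) + g 0*(z:ℂ) ∈ D) :
    pdz (itp F k m g L) x y z = itp F k m g (stepL g L) x y z := by
  have h' : g 0*(z:ℂ) + m 0*(y:ℂ) + k 0*(x:ℂ) ∈ D := by
    rwa [show g 0*(z:ℂ) + m 0*(y:ℂ) + k 0*(x:ℂ) = k 0*(x:ℂ) + m 0*(y:ℂ) + g 0*(z:ℂ) from by ring]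
  have : pdz (itp F k m g L) x y z = pdx (itp F g m k L) z y x := by
    unfold pdx pdz
    congr 1
    funext s
    exact itp_swapxz F k m g L x y s
  rw [this, pdx_itp F D hG g m k L z y x h', ← itp_swapxz]

lemma pdx_congr_s6 (D : Set ℂ) (hD : IsOpen D) (k m g : ℕ → ℂ) (U V : ℝ → ℝ → ℝ → ℂ)
    (h : ∀ x y z : ℝ, k 0*(x:ℂ) + m 0*(y:ℂ) + g 0*(z:ℂ) ∈ D → U x y z = V x y z)
    (x y z : ℝ) (hm : k 0*(x:ℂ) + m 0*(y:ℂ) + g 0*(z:ℂ) ∈ D) :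
    pdx U x y z = pdx V x y z := by
  unfold pdx
  apply Filter.EventuallyEq.deriv_eq
  have hopen : IsOpen {s : ℝ | k 0*(s:ℂ) + m 0*(y:ℂ) + g 0*(z:ℂ) ∈ D} := by
    apply hD.preimage (f := fun s : ℝ => k 0*(s:ℂ) + m 0*(y:ℂ) + g 0*(z:ℂ))
    fun_prop
  exact Filter.eventuallyEq_of_mem (hopen.mem_nhds hm) (fun s hs => h s y z hs)

lemma pdy_congr_s6 (D : Set ℂ) (hD : IsOpen D) (k m g : ℕ → ℂ) (U V : ℝ → ℝ → ℝ → ℂ)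
    (h : ∀ x y z : ℝ, k 0*(x:ℂ) + m 0*(y:ℂ) + g 0*(z:ℂ) ∈ D → U x y z = V x y z)
    (x y z : ℝ) (hm : k 0*(x:ℂ) + m 0*(y:ℂ) + g 0*(z:ℂ) ∈ D) :
    pdy U x y z = pdy V x y z := by
  unfold pdy
  apply Filter.EventuallyEq.deriv_eq
  have hopen : IsOpen {s : ℝ | k 0*(x:ℂ) + m 0*(s:ℂ) + g 0*(z:ℂ) ∈ D} := by
    apply hD.preimage (f := fun s : ℝ => k 0*(x:ℂ) + m 0*(s:ℂ) + g 0*(z:ℂ))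
    fun_prop
  exact Filter.eventuallyEq_of_mem (hopen.mem_nhds hm) (fun s hs => h x s z hs)

lemma pdz_congr_s6 (D : Set ℂ) (hD : IsOpen D) (k m g : ℕ → ℂ) (U V : ℝ → ℝ → ℝ → ℂ)
    (h : ∀ x y z : ℝ, k 0*(x:ℂ) + m 0*(y:ℂ) + g 0*(z:ℂ) ∈ D → U x y z = V x y z)
    (x y z : ℝ) (hm : k 0*(x:ℂ) + m 0*(y:ℂ) + g 0*(z:ℂ) ∈ D) :
    pdz U x y z = pdz V x y z := by
  unfold pdz
  apply Filter.EventuallyEq.deriv_eq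
  have hopen : IsOpen {s : ℝ | k 0*(x:ℂ) + m 0*(y:ℂ) + g 0*(s:ℂ) ∈ D} := by
    apply hD.preimage (f := fun s : ℝ => k 0*(x:ℂ) + m 0*(y:ℂ) + g 0*(s:ℂ))
    fun_prop
  exact Filter.eventuallyEq_of_mem (hopen.mem_nhds hm) (fun s hs => h x y s hs)

set_option maxHeartbeats 1000000 in
lemma main_aux (k m g : ℕ → ℂ)
    (hA : k 0 ^2 + m 0^2 + g 0^2 = 0) (hB : k 0*k 1 + m 0*m 1 + g 0*g 1 = 0)
    (D : Set ℂ) (hD : IsOpen D) (F : ℂ → ℂ) (hF : DifferentiableOn ℂ F D)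
    (x y z : ℝ) (hmem : k 0 * (x : ℂ) + m 0 * (y : ℂ) + g 0 * (z : ℂ) ∈ D) :
    biharm (fun x y z =>
      (k 2 * (x : ℂ) + m 2 * (y : ℂ) + g 2 * (z : ℂ)) * deriv F (k 0 * (x : ℂ) + m 0 * (y : ℂ) + g 0 * (z : ℂ)) +
      (k 1 * (x : ℂ) + m 1 * (y : ℂ) + g 1 * (z : ℂ)) ^ 2 / 2 * iteratedDeriv 2 F (k 0 * (x : ℂ) + m 0 * (y : ℂ) + g 0 * (z : ℂ))) x y z = 0 := by
  have han : ∀ n, AnalyticOnNhd ℂ (iteratedDeriv n F) D := by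
    intro n
    induction n with
    | zero => simpa [iteratedDeriv_zero] using hF.analyticOnNhd hD
    | succ n ih => rw [iteratedDeriv_succ]; exact ih.deriv
  have hG : ∀ n w, w ∈ D → HasDerivAt (iteratedDeriv n F) (iteratedDeriv (n+1) F w) w := by
    intro n w hw
    have h1 := ((han n w hw).differentiableAt).hasDerivAt
    rw [iteratedDeriv_succ]
    exact h1
  set L0 : List Trm := [(1, 0, 0, 1, 0), (2, 0, 0, 0, (1/2 : ℂ))] with hL0
  have h0 : ∀ x y z : ℝ, k 0*(x:ℂ) + m 0*(y:ℂ) + g 0*(z:ℂ) ∈ D →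
      (fun x y z : ℝ =>
      (k 2 * (x : ℂ) + m 2 * (y : ℂ) + g 2 * (z : ℂ)) * deriv F (k 0 * (x : ℂ) + m 0 * (y : ℂ) + g 0 * (z : ℂ)) +
      (k 1 * (x : ℂ) + m 1 * (y : ℂ) + g 1 * (z : ℂ)) ^ 2 / 2 * iteratedDeriv 2 F (k 0 * (x : ℂ) + m 0 * (y : ℂ) + g 0 * (z : ℂ))) x y z
      = itp F k m g L0 x y z := by
    intro x y z _
    simp only [hL0, itp, iteratedDeriv_one]
    ring
  have stepx' : ∀ (L : List Trm) (U : ℝ→ℝ→ℝ→ℂ),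
      (∀ x y z : ℝ, k 0*(x:ℂ) + m 0*(y:ℂ) + g 0*(z:ℂ) ∈ D → U x y z = itp F k m g L x y z) →
      ∀ x y z : ℝ, k 0*(x:ℂ) + m 0*(y:ℂ) + g 0*(z:ℂ) ∈ D →
        pdx U x y z = itp F k m g (stepL k L) x y z := by
    intro L U h x y z hm
    rw [pdx_congr_s6 D hD k m g U (itp F k m g L) h x y z hm, pdx_itp F D hG k m g L x y z hm]
  have stepy' : ∀ (L : List Trm) (U : ℝ→ℝ→ℝ→ℂ),
      (∀ x y z : ℝ, k 0*(x:ℂ) + m 0*(y:ℂ) + g 0*(z:ℂ) ∈ D → U x y z = itp F k m g L x y z) →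
      ∀ x y z : ℝ, k 0*(x:ℂ) + m 0*(y:ℂ) + g 0*(z:ℂ) ∈ D →
        pdy U x y z = itp F k m g (stepL m L) x y z := by
    intro L U h x y z hm
    rw [pdy_congr_s6 D hD k m g U (itp F k m g L) h x y z hm, pdy_itp F D hG k m g L x y z hm]
  have stepz' : ∀ (L : List Trm) (U : ℝ→ℝ→ℝ→ℂ),
      (∀ x y z : ℝ, k 0*(x:ℂ) + m 0*(y:ℂ) + g 0*(z:ℂ) ∈ D → U x y z = itp F k m g L x y z) →
      ∀ x y z : ℝ, k 0*(x:ℂ) + m 0*(y:ℂ) + g 0*(z:ℂ) ∈ D →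
        pdz U x y z = itp F k m g (stepL g L) x y z := by
    intro L U h x y z hm
    rw [pdz_congr_s6 D hD k m g U (itp F k m g L) h x y z hm, pdz_itp F D hG k m g L x y z hm]
  have hxx := stepx' _ _ (stepx' _ _ h0)
  have hyy := stepy' _ _ (stepy' _ _ h0)
  have hzz := stepz' _ _ (stepz' _ _ h0)
  have hxxxx := stepx' _ _ (stepx' _ _ hxx)
  have hyyyy := stepy' _ _ (stepy' _ _ hyy)
  have hzzzz := stepz' _ _ (stepz' _ _ hzz)
  have hxxyy := stepx' _ _ (stepx' _ _ hyy)
  have hxxzz := stepx' _ _ (stepx' _ _ hzz)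
  have hyyzz := stepy' _ _ (stepy' _ _ hzz)
  have hm' : k 0*(x:ℂ) + m 0*(y:ℂ) + g 0*(z:ℂ) ∈ D := hmem
  simp only [biharm]
  rw [hxxxx x y z hm', hyyyy x y z hm', hzzzz x y z hm', hxxyy x y z hm',
    hxxzz x y z hm', hyyzz x y z hm']
  simp only [hL0, stepL, stepT, itp, List.cons_append, List.nil_append]
  linear_combination
    (((k 1*(x:ℂ)+m 1*(y:ℂ)+g 1*(z:ℂ))^2/2 * (k 0^2+m 0^2+g 0^2)) *
        iteratedDeriv 6 F (k 0*(x:ℂ)+m 0*(y:ℂ)+g 0*(z:ℂ))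
      + ((k 2*(x:ℂ)+m 2*(y:ℂ)+g 2*(z:ℂ))*(k 0^2+m 0^2+g 0^2)
          + 4*(k 1*(x:ℂ)+m 1*(y:ℂ)+g 1*(z:ℂ))*(k 0*k 1+m 0*m 1+g 0*g 1)) *
        iteratedDeriv 5 F (k 0*(x:ℂ)+m 0*(y:ℂ)+g 0*(z:ℂ))
      + (4*(k 0*k 2+m 0*m 2+g 0*g 2) + 2*(k 1^2+m 1^2+g 1^2)) *
        iteratedDeriv 4 F (k 0*(x:ℂ)+m 0*(y:ℂ)+g 0*(z:ℂ))) * hA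
    + (4*(k 0*k 1+m 0*m 1+g 0*g 1) *
        iteratedDeriv 4 F (k 0*(x:ℂ)+m 0*(y:ℂ)+g 0*(z:ℂ))) * hB

/-- If the coefficients of `X^r`, `r = 0, 1, 2`, in `(p² + q² + w²)²` vanish and `F` is holomorphic on the open set `D`, then `U₂ = ξ₂·F′(ξ₀) + (ξ₁²/2)·F″(ξ₀)` satisfies `Δ²U₂ = 0` on `Π`. -/
theorem biharmonic_U2 (k m g : ℕ → ℂ)
    (hcoef : ∀ r < 3,
      (((∑ r ∈ Finset.range 3, C (k r) * X ^ r) ^ 2 +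
          (∑ r ∈ Finset.range 3, C (m r) * X ^ r) ^ 2 +
          (∑ r ∈ Finset.range 3, C (g r) * X ^ r) ^ 2) ^ 2 : Polynomial ℂ).coeff r = 0)
    (D : Set ℂ) (hD : IsOpen D) (F : ℂ → ℂ) (hF : DifferentiableOn ℂ F D)
    (x y z : ℝ) (hmem : k 0 * (x : ℂ) + m 0 * (y : ℂ) + g 0 * (z : ℂ) ∈ D) :
    biharm (fun x y z =>
      (k 2 * (x : ℂ) + m 2 * (y : ℂ) + g 2 * (z : ℂ)) * deriv F (k 0 * (x : ℂ) + m 0 * (y : ℂ) + g 0 * (z : ℂ)) +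
      (k 1 * (x : ℂ) + m 1 * (y : ℂ) + g 1 * (z : ℂ)) ^ 2 / 2 * iteratedDeriv 2 F (k 0 * (x : ℂ) + m 0 * (y : ℂ) + g 0 * (z : ℂ))) x y z = 0 := by
  obtain ⟨hA, hB⟩ := coefAB k m g hcoef
  exact main_aux k m g hA hB D hD F hF x y z hmem
end

section
/- Let k_r, m_r, g_r ∈ ℂ for r = 0, …, 3 and set p(X) = Σ_{r=0}^{3} k_rX^r, q(X) = Σ_{r=0}^{3} m_rX^r, w(X) = Σ_{r=0}^{3} g_rX^r. Assume the coefficient of X^r in (p² + q² + w²)² vanishes for r = 0, 1, 2, 3. Let D ⊆ ℂ be open, F : ℂ → ℂ holomorphic on D, ξ_r(x,y,z) = k_r x + m_r y + g_r z, and Π = {(x,y,z) ∈ ℝ³ : ξ₀(x,y,z) ∈ D}. Then the function U₃ = ξ₃·F′(ξ₀) + ξ₁ξ₂·F″(ξ₀) + (ξ₁³/3!)·F‴(ξ₀) satisfies the three-dimensional biharmonic equation Δ²U₃ = 0 at every point of Π. -/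
open Polynomial

inductive MyExpr where
  | c : ℂ → MyExpr
  | xi : ℕ → MyExpr
  | fd : ℕ → MyExpr
  | add : MyExpr → MyExpr → MyExpr
  | mul : MyExpr → MyExpr → MyExpr

namespace MyExpr

noncomputable def eval (k m g : ℕ → ℂ) (F : ℂ → ℂ) : MyExpr → ℝ → ℝ → ℝ → ℂ
  | c a, _, _, _ => a
  | xi r, x, y, z => k r * x + m r * y + g r * z
  | fd n, x, y, z => iteratedDeriv n F (k 0 * x + m 0 * y + g 0 * z)
  | add a b, x, y, z => eval k m g F a x y z + eval k m g F b x y z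
  | mul a b, x, y, z => eval k m g F a x y z * eval k m g F b x y z

def dE (co : ℕ → ℂ) : MyExpr → MyExpr
  | c _ => c 0
  | xi r => c (co r)
  | fd n => mul (c (co 0)) (fd (n + 1))
  | add a b => add (dE co a) (dE co b)
  | mul a b => add (mul (dE co a) b) (mul a (dE co b))

variable {k m g : ℕ → ℂ} {F : ℂ → ℂ} {D : Set ℂ}

theorem hasDerivAt_x
    (hder : ∀ n w, w ∈ D → HasDerivAt (iteratedDeriv n F) (iteratedDeriv (n + 1) F w) w)
    (e : MyExpr) (x y z : ℝ) (h : k 0 * x + m 0 * y + g 0 * z ∈ D) :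
    HasDerivAt (fun s : ℝ => eval k m g F e s y z) (eval k m g F (dE k e) x y z) x := by
  induction e with
  | c a => simpa [eval, dE] using hasDerivAt_const x a
  | xi r =>
      have h1 : HasDerivAt (fun s : ℝ => (s : ℂ)) 1 x := by
        simpa using (hasDerivAt_id x).ofReal_comp
      simpa [eval, dE, add_assoc] using ((h1.const_mul (k r)).add_const (m r * y + g r * z))
  | fd n =>
      have h1 : HasDerivAt (fun s : ℝ => k 0 * (s : ℂ) + (m 0 * y + g 0 * z)) (k 0) x := by
        have h0 : HasDerivAt (fun s : ℝ => (s : ℂ)) 1 x := by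
          simpa using (hasDerivAt_id x).ofReal_comp
        simpa using ((h0.const_mul (k 0)).add_const (m 0 * y + g 0 * z))
      have h' : k 0 * (x:ℂ) + (m 0 * y + g 0 * z) ∈ D := by rwa [← add_assoc]
      have h2 := hder n _ h'
      have h3 := HasDerivAt.comp x h2 h1
      have h4 : HasDerivAt (fun s : ℝ => iteratedDeriv n F (k 0 * (s : ℂ) + m 0 * ↑y + g 0 * ↑z))
          (iteratedDeriv (n + 1) F (k 0 * ↑x + m 0 * ↑y + g 0 * ↑z) * k 0) x := by
        simpa only [Function.comp_def, ← add_assoc] using h3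
      simp only [eval, dE]
      exact (mul_comm (iteratedDeriv (n + 1) F (k 0 * ↑x + m 0 * ↑y + g 0 * ↑z)) (k 0)) ▸ h4
  | add a b iha ihb => simp only [eval, dE]; exact iha.add ihb
  | mul a b iha ihb => simp only [eval, dE]; exact iha.mul ihb


theorem hasDerivAt_y
    (hder : ∀ n w, w ∈ D → HasDerivAt (iteratedDeriv n F) (iteratedDeriv (n + 1) F w) w)
    (e : MyExpr) (x y z : ℝ) (h : k 0 * x + m 0 * y + g 0 * z ∈ D) :
    HasDerivAt (fun s : ℝ => eval k m g F e x s z) (eval k m g F (dE m e) x y z) y := by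
  have h0 : ∀ t : ℝ, HasDerivAt (fun s : ℝ => (s : ℂ)) 1 t := fun t => by
    simpa using (hasDerivAt_id t).ofReal_comp
  induction e with
  | c a => simpa [eval, dE] using hasDerivAt_const y a
  | xi r =>
      simpa [eval, dE] using (((h0 y).const_mul (m r)).const_add (k r * x)).add_const (g r * z)
  | fd n =>
      have h1 : HasDerivAt (fun s : ℝ => k 0 * (x : ℂ) + m 0 * (s : ℂ) + g 0 * (z : ℂ)) (m 0) y := by
        simpa using (((h0 y).const_mul (m 0)).const_add (k 0 * x)).add_const (g 0 * z)
      have h2 := hder n _ h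
      have h3 := HasDerivAt.comp y h2 h1
      have h4 : HasDerivAt (fun s : ℝ => iteratedDeriv n F (k 0 * ↑x + m 0 * (s : ℂ) + g 0 * ↑z))
          (iteratedDeriv (n + 1) F (k 0 * ↑x + m 0 * ↑y + g 0 * ↑z) * m 0) y := by
        simpa only [Function.comp_def] using h3
      simp only [eval, dE]
      exact (mul_comm (iteratedDeriv (n + 1) F (k 0 * ↑x + m 0 * ↑y + g 0 * ↑z)) (m 0)) ▸ h4
  | add a b iha ihb => simp only [eval, dE]; exact iha.add ihb
  | mul a b iha ihb => simp only [eval, dE]; exact iha.mul ihb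

theorem hasDerivAt_z
    (hder : ∀ n w, w ∈ D → HasDerivAt (iteratedDeriv n F) (iteratedDeriv (n + 1) F w) w)
    (e : MyExpr) (x y z : ℝ) (h : k 0 * x + m 0 * y + g 0 * z ∈ D) :
    HasDerivAt (fun s : ℝ => eval k m g F e x y s) (eval k m g F (dE g e) x y z) z := by
  have h0 : ∀ t : ℝ, HasDerivAt (fun s : ℝ => (s : ℂ)) 1 t := fun t => by
    simpa using (hasDerivAt_id t).ofReal_comp
  induction e with
  | c a => simpa [eval, dE] using hasDerivAt_const z a
  | xi r =>
      simpa [eval, dE] using (((h0 z).const_mul (g r)).const_add (k r * x + m r * y))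
  | fd n =>
      have h1 : HasDerivAt (fun s : ℝ => k 0 * (x : ℂ) + m 0 * (y : ℂ) + g 0 * (s : ℂ)) (g 0) z := by
        simpa using (((h0 z).const_mul (g 0)).const_add (k 0 * x + m 0 * y))
      have h2 := hder n _ h
      have h3 := HasDerivAt.comp z h2 h1
      have h4 : HasDerivAt (fun s : ℝ => iteratedDeriv n F (k 0 * ↑x + m 0 * ↑y + g 0 * (s : ℂ)))
          (iteratedDeriv (n + 1) F (k 0 * ↑x + m 0 * ↑y + g 0 * ↑z) * g 0) z := by
        simpa only [Function.comp_def] using h3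
      simp only [eval, dE]
      exact (mul_comm (iteratedDeriv (n + 1) F (k 0 * ↑x + m 0 * ↑y + g 0 * ↑z)) (g 0)) ▸ h4
  | add a b iha ihb => simp only [eval, dE]; exact iha.add ihb
  | mul a b iha ihb => simp only [eval, dE]; exact iha.mul ihb

theorem pdx_rep (hD : IsOpen D)
    (hder : ∀ n w, w ∈ D → HasDerivAt (iteratedDeriv n F) (iteratedDeriv (n + 1) F w) w)
    (e : MyExpr) (U : ℝ → ℝ → ℝ → ℂ)
    (hU : ∀ x y z : ℝ, k 0 * x + m 0 * y + g 0 * z ∈ D → U x y z = eval k m g F e x y z) :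
    ∀ x y z : ℝ, k 0 * x + m 0 * y + g 0 * z ∈ D →
      pdx U x y z = eval k m g F (dE k e) x y z := by
  intro x y z h
  have hcont : Continuous (fun s : ℝ => k 0 * (s : ℂ) + m 0 * y + g 0 * z) := by
    fun_prop
  have hmemn : {s : ℝ | k 0 * (s : ℂ) + m 0 * y + g 0 * z ∈ D} ∈ nhds x :=
    (hD.preimage hcont).mem_nhds h
  have heq : (fun s : ℝ => U s y z) =ᶠ[nhds x] (fun s => eval k m g F e s y z) :=
    Filter.eventuallyEq_of_mem hmemn (fun s hs => hU s y z hs)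
  show deriv (fun s : ℝ => U s y z) x = _
  rw [heq.deriv_eq]
  exact (hasDerivAt_x hder e x y z h).deriv

theorem pdy_rep (hD : IsOpen D)
    (hder : ∀ n w, w ∈ D → HasDerivAt (iteratedDeriv n F) (iteratedDeriv (n + 1) F w) w)
    (e : MyExpr) (U : ℝ → ℝ → ℝ → ℂ)
    (hU : ∀ x y z : ℝ, k 0 * x + m 0 * y + g 0 * z ∈ D → U x y z = eval k m g F e x y z) :
    ∀ x y z : ℝ, k 0 * x + m 0 * y + g 0 * z ∈ D →
      pdy U x y z = eval k m g F (dE m e) x y z := by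
  intro x y z h
  have hcont : Continuous (fun s : ℝ => k 0 * (x : ℂ) + m 0 * (s : ℂ) + g 0 * z) := by
    fun_prop
  have hmemn : {s : ℝ | k 0 * (x : ℂ) + m 0 * (s : ℂ) + g 0 * z ∈ D} ∈ nhds y :=
    (hD.preimage hcont).mem_nhds h
  have heq : (fun s : ℝ => U x s z) =ᶠ[nhds y] (fun s => eval k m g F e x s z) :=
    Filter.eventuallyEq_of_mem hmemn (fun s hs => hU x s z hs)
  show deriv (fun s : ℝ => U x s z) y = _
  rw [heq.deriv_eq]
  exact (hasDerivAt_y hder e x y z h).deriv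

theorem pdz_rep (hD : IsOpen D)
    (hder : ∀ n w, w ∈ D → HasDerivAt (iteratedDeriv n F) (iteratedDeriv (n + 1) F w) w)
    (e : MyExpr) (U : ℝ → ℝ → ℝ → ℂ)
    (hU : ∀ x y z : ℝ, k 0 * x + m 0 * y + g 0 * z ∈ D → U x y z = eval k m g F e x y z) :
    ∀ x y z : ℝ, k 0 * x + m 0 * y + g 0 * z ∈ D →
      pdz U x y z = eval k m g F (dE g e) x y z := by
  intro x y z h
  have hcont : Continuous (fun s : ℝ => k 0 * (x : ℂ) + m 0 * (y : ℂ) + g 0 * (s : ℂ)) := by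
    fun_prop
  have hmemn : {s : ℝ | k 0 * (x : ℂ) + m 0 * (y : ℂ) + g 0 * (s : ℂ) ∈ D} ∈ nhds z :=
    (hD.preimage hcont).mem_nhds h
  have heq : (fun s : ℝ => U x y s) =ᶠ[nhds z] (fun s => eval k m g F e x y s) :=
    Filter.eventuallyEq_of_mem hmemn (fun s hs => hU x y s hs)
  show deriv (fun s : ℝ => U x y s) z = _
  rw [heq.deriv_eq]
  exact (hasDerivAt_z hder e x y z h).deriv

end MyExpr

set_option maxHeartbeats 2000000 in
/-- If the coefficients of `X^r`, `r = 0, …, 3`, in `(p² + q² + w²)²` vanish and `F` is holomorphic on the open set `D`, then `U₃ = ξ₃·F′(ξ₀) + ξ₁ξ₂·F″(ξ₀) + (ξ₁³/3!)·F‴(ξ₀)` satisfies `Δ²U₃ = 0` on `Π`. -/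
theorem biharmonic_U3 (k m g : ℕ → ℂ)
    (hcoef : ∀ r < 4,
      (((∑ r ∈ Finset.range 4, C (k r) * X ^ r) ^ 2 +
          (∑ r ∈ Finset.range 4, C (m r) * X ^ r) ^ 2 +
          (∑ r ∈ Finset.range 4, C (g r) * X ^ r) ^ 2) ^ 2 : Polynomial ℂ).coeff r = 0)
    (D : Set ℂ) (hD : IsOpen D) (F : ℂ → ℂ) (hF : DifferentiableOn ℂ F D)
    (x y z : ℝ) (hmem : k 0 * (x : ℂ) + m 0 * (y : ℂ) + g 0 * (z : ℂ) ∈ D) :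
    biharm (fun x y z =>
      (k 3 * (x : ℂ) + m 3 * (y : ℂ) + g 3 * (z : ℂ)) * deriv F (k 0 * (x : ℂ) + m 0 * (y : ℂ) + g 0 * (z : ℂ)) +
      (k 1 * (x : ℂ) + m 1 * (y : ℂ) + g 1 * (z : ℂ)) * (k 2 * (x : ℂ) + m 2 * (y : ℂ) + g 2 * (z : ℂ)) * iteratedDeriv 2 F (k 0 * (x : ℂ) + m 0 * (y : ℂ) + g 0 * (z : ℂ)) +
      (k 1 * (x : ℂ) + m 1 * (y : ℂ) + g 1 * (z : ℂ)) ^ 3 / 6 * iteratedDeriv 3 F (k 0 * (x : ℂ) + m 0 * (y : ℂ) + g 0 * (z : ℂ))) x y z = 0 := by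
  -- coefficient conditions
  have h0 := hcoef 0 (by norm_num)
  have h2 := hcoef 2 (by norm_num)
  rw [Polynomial.coeff_zero_eq_eval_zero] at h0
  simp [Finset.sum_range_succ] at h0
  have h00 : k 0 ^ 2 + m 0 ^ 2 + g 0 ^ 2 = 0 := h0
  set Q : Polynomial ℂ := (((∑ r ∈ Finset.range 4, C (k r) * X ^ r) ^ 2 +
          (∑ r ∈ Finset.range 4, C (m r) * X ^ r) ^ 2 +
          (∑ r ∈ Finset.range 4, C (g r) * X ^ r) ^ 2) ^ 2) with hQ
  have h2' : (Q.derivative.derivative).eval 0 = 0 := by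
    rw [← Polynomial.coeff_zero_eq_eval_zero]
    simp [Polynomial.coeff_derivative, h2]
  rw [hQ] at h2'
  simp [Finset.sum_range_succ, derivative_pow, derivative_add, derivative_mul] at h2'
  have hsq : (k 0 * k 1 + m 0 * m 1 + g 0 * g 1) ^ 2 = 0 := by
    linear_combination h2' / 8 - ((2 * k 1 * k 1 + 2 * k 0 * (k 2 * 2) +
      (2 * m 1 * m 1 + 2 * m 0 * (m 2 * 2)) + (2 * g 1 * g 1 + 2 * g 0 * (g 2 * 2))) / 4) * h00
  have h01 : k 0 * k 1 + m 0 * m 1 + g 0 * g 1 = 0 :=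
    pow_eq_zero_iff (M₀ := ℂ) (n := 2) (by norm_num) |>.mp hsq
  -- analyticity of iterated derivatives
  have hA : ∀ n, AnalyticOnNhd ℂ (iteratedDeriv n F) D := by
    intro n
    induction n with
    | zero => simpa using hF.analyticOnNhd hD
    | succ n ih => rw [iteratedDeriv_succ]; exact ih.deriv
  have hder : ∀ n w, w ∈ D → HasDerivAt (iteratedDeriv n F) (iteratedDeriv (n + 1) F w) w := by
    intro n w hw
    rw [iteratedDeriv_succ]
    exact ((hA n w hw).differentiableAt).hasDerivAt
  -- the symbolic expression
  set e : MyExpr := .add (.add (.mul (.xi 3) (.fd 1)) (.mul (.mul (.xi 1) (.xi 2)) (.fd 2)))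
    (.mul (.mul (.c (1/6)) (.mul (.mul (.xi 1) (.xi 1)) (.xi 1))) (.fd 3)) with he
  have hU : ∀ x y z : ℝ, k 0 * x + m 0 * y + g 0 * z ∈ D →
      (fun x y z : ℝ =>
      (k 3 * (x : ℂ) + m 3 * (y : ℂ) + g 3 * (z : ℂ)) * deriv F (k 0 * (x : ℂ) + m 0 * (y : ℂ) + g 0 * (z : ℂ)) +
      (k 1 * (x : ℂ) + m 1 * (y : ℂ) + g 1 * (z : ℂ)) * (k 2 * (x : ℂ) + m 2 * (y : ℂ) + g 2 * (z : ℂ)) * iteratedDeriv 2 F (k 0 * (x : ℂ) + m 0 * (y : ℂ) + g 0 * (z : ℂ)) +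
      (k 1 * (x : ℂ) + m 1 * (y : ℂ) + g 1 * (z : ℂ)) ^ 3 / 6 * iteratedDeriv 3 F (k 0 * (x : ℂ) + m 0 * (y : ℂ) + g 0 * (z : ℂ))) x y z
      = MyExpr.eval k m g F e x y z := by
    intro a b c _
    simp only [he, MyExpr.eval, iteratedDeriv_one]
    ring
  have hx1 := MyExpr.pdx_rep hD hder _ _ hU
  have hx2 := MyExpr.pdx_rep hD hder _ _ hx1
  have hx3 := MyExpr.pdx_rep hD hder _ _ hx2
  have hx4 := MyExpr.pdx_rep hD hder _ _ hx3
  have hy1 := MyExpr.pdy_rep hD hder _ _ hU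
  have hy2 := MyExpr.pdy_rep hD hder _ _ hy1
  have hy3 := MyExpr.pdy_rep hD hder _ _ hy2
  have hy4 := MyExpr.pdy_rep hD hder _ _ hy3
  have hz1 := MyExpr.pdz_rep hD hder _ _ hU
  have hz2 := MyExpr.pdz_rep hD hder _ _ hz1
  have hz3 := MyExpr.pdz_rep hD hder _ _ hz2
  have hz4 := MyExpr.pdz_rep hD hder _ _ hz3
  have hxy3 := MyExpr.pdx_rep hD hder _ _ hy2
  have hxy4 := MyExpr.pdx_rep hD hder _ _ hxy3
  have hxz3 := MyExpr.pdx_rep hD hder _ _ hz2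
  have hxz4 := MyExpr.pdx_rep hD hder _ _ hxz3
  have hyz3 := MyExpr.pdy_rep hD hder _ _ hz2
  have hyz4 := MyExpr.pdy_rep hD hder _ _ hyz3
  simp only [biharm]
  rw [hx4 x y z hmem, hy4 x y z hmem, hz4 x y z hmem, hxy4 x y z hmem, hxz4 x y z hmem,
    hyz4 x y z hmem]
  simp only [he, MyExpr.dE, MyExpr.eval]
  norm_num only
  linear_combination
    ((4 * g 1 * g 2 + 4 * g 0 * g 3 + 4 * m 1 * m 2 + 4 * m 0 * m 3 + 4 * k 1 * k 2 + 4 * k 0 * k 3) * iteratedDeriv 4 F (k 0 * (x:ℂ) + m 0 * (y:ℂ) + g 0 * (z:ℂ)) +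
      (2 * g 1 ^ 3 * (z:ℂ) + 8 * g 0 * g 1 * g 2 * (z:ℂ) + g 0 ^ 2 * g 3 * (z:ℂ) + m 3 * g 0 ^ 2 * (y:ℂ) + 4 * m 2 * g 0 * g 1 * (y:ℂ) + 2 * m 1 * g 1 ^ 2 * (y:ℂ) + 4 * m 1 * g 0 * g 2 * (y:ℂ) + 2 * m 1 ^ 2 * g 1 * (z:ℂ) + 2 * m 1 ^ 3 * (y:ℂ) + 4 * m 0 * m 2 * g 1 * (z:ℂ) + 4 * m 0 * m 1 * g 2 * (z:ℂ) + 8 * m 0 * m 1 * m 2 * (y:ℂ) + m 0 ^ 2 * g 3 * (z:ℂ) + m 0 ^ 2 * m 3 * (y:ℂ) + k 3 * g 0 ^ 2 * (x:ℂ) + k 3 * m 0 ^ 2 * (x:ℂ) + 4 * k 2 * g 0 * g 1 * (x:ℂ) + 4 * k 2 * m 0 * m 1 * (x:ℂ) + 2 * k 1 * g 1 ^ 2 * (x:ℂ) + 4 * k 1 * g 0 * g 2 * (x:ℂ) + 2 * k 1 * m 1 ^ 2 * (x:ℂ) + 4 * k 1 * m 0 * m 2 * (x:ℂ) + 2 *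 k 1 ^ 2 * g 1 * (z:ℂ) + 2 * k 1 ^ 2 * m 1 * (y:ℂ) + 2 * k 1 ^ 3 * (x:ℂ) + 4 * k 0 * k 2 * g 1 * (z:ℂ) + 4 * k 0 * k 2 * m 1 * (y:ℂ) + 4 * k 0 * k 1 * g 2 * (z:ℂ) + 4 * k 0 * k 1 * m 2 * (y:ℂ) + 8 * k 0 * k 1 * k 2 * (x:ℂ) + k 0 ^ 2 * g 3 * (z:ℂ) + k 0 ^ 2 * m 3 * (y:ℂ) + k 0 ^ 2 * k 3 * (x:ℂ)) * iteratedDeriv 5 F (k 0 * (x:ℂ) + m 0 * (y:ℂ) + g 0 * (z:ℂ)) +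
      (2 * g 0 * g 1 ^ 3 * (z:ℂ) ^ 2 + g 0 ^ 2 * g 1 * g 2 * (z:ℂ) ^ 2 + m 2 * g 0 ^ 2 * g 1 * (y:ℂ) * (z:ℂ) + 4 * m 1 * g 0 * g 1 ^ 2 * (y:ℂ) * (z:ℂ) + m 1 * g 0 ^ 2 * g 2 * (y:ℂ) * (z:ℂ) + m 1 * m 2 * g 0 ^ 2 * (y:ℂ) ^ 2 + 2 * m 1 ^ 2 * g 0 * g 1 * (y:ℂ) ^ 2 + 2 * m 0 * m 1 * g 1 ^ 2 * (z:ℂ) ^ 2 + 4 * m 0 * m 1 ^ 2 * g 1 * (y:ℂ) * (z:ℂ) + 2 * m 0 * m 1 ^ 3 * (y:ℂ) ^ 2 + m 0 ^ 2 * g 1 * g 2 * (z:ℂ) ^ 2 + m 0 ^ 2 * m 2 * g 1 * (y:ℂ) * (z:ℂ) + m 0 ^ 2 * m 1 * g 2 * (y:ℂ) * (z:ℂ) + m 0 ^ 2 * m 1 * m 2 * (y:ℂ) ^ 2 + k 2 * g 0 ^ 2 * g 1 * (x:ℂ) * (z:ℂ) + k 2 * m 1 * g 0 ^ 2 * (x:ℂ)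 * (y:ℂ) + k 2 * m 0 ^ 2 * g 1 * (x:ℂ) * (z:ℂ) + k 2 * m 0 ^ 2 * m 1 * (x:ℂ) * (y:ℂ) + 4 * k 1 * g 0 * g 1 ^ 2 * (x:ℂ) * (z:ℂ) + k 1 * g 0 ^ 2 * g 2 * (x:ℂ) * (z:ℂ) + k 1 * m 2 * g 0 ^ 2 * (x:ℂ) * (y:ℂ) + 4 * k 1 * m 1 * g 0 * g 1 * (x:ℂ) * (y:ℂ) + 4 * k 1 * m 0 * m 1 * g 1 * (x:ℂ) * (z:ℂ) + 4 * k 1 * m 0 * m 1 ^ 2 * (x:ℂ) * (y:ℂ) + k 1 * m 0 ^ 2 * g 2 * (x:ℂ) * (z:ℂ) + k 1 * m 0 ^ 2 * m 2 * (x:ℂ) * (y:ℂ) + k 1 * k 2 * g 0 ^ 2 * (x:ℂ) ^ 2 + k 1 * k 2 * m 0 ^ 2 * (x:ℂ) ^ 2 + 2 * k 1 ^ 2 * g 0 * g 1 * (x:ℂ) ^ 2 + 2 * k 1 ^ 2 * m 0 * m 1 * (x:ℂ) ^ 2 + 2 * k 0 * k 1 * g 1 ^ 2 * (z:ℂ)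 ^ 2 + 4 * k 0 * k 1 * m 1 * g 1 * (y:ℂ) * (z:ℂ) + 2 * k 0 * k 1 * m 1 ^ 2 * (y:ℂ) ^ 2 + 4 * k 0 * k 1 ^ 2 * g 1 * (x:ℂ) * (z:ℂ) + 4 * k 0 * k 1 ^ 2 * m 1 * (x:ℂ) * (y:ℂ) + 2 * k 0 * k 1 ^ 3 * (x:ℂ) ^ 2 + k 0 ^ 2 * g 1 * g 2 * (z:ℂ) ^ 2 + k 0 ^ 2 * m 2 * g 1 * (y:ℂ) * (z:ℂ) + k 0 ^ 2 * m 1 * g 2 * (y:ℂ) * (z:ℂ) + k 0 ^ 2 * m 1 * m 2 * (y:ℂ) ^ 2 + k 0 ^ 2 * k 2 * g 1 * (x:ℂ) * (z:ℂ) + k 0 ^ 2 * k 2 * m 1 * (x:ℂ) * (y:ℂ) + k 0 ^ 2 * k 1 * g 2 * (x:ℂ) * (z:ℂ) + k 0 ^ 2 * k 1 * m 2 * (x:ℂ) * (y:ℂ) + k 0 ^ 2 * k 1 * k 2 * (x:ℂ) ^ 2) * iteratedDeriv 6 F (k 0 * (x:ℂ) + m 0 * (y:ℂ) + g 0 * (z:ℂ))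 +
      ((1/6) * g 0 ^ 2 * g 1 ^ 3 * (z:ℂ) ^ 3 + (1/2) * m 1 * g 0 ^ 2 * g 1 ^ 2 * (y:ℂ) * (z:ℂ) ^ 2 + (1/2) * m 1 ^ 2 * g 0 ^ 2 * g 1 * (y:ℂ) ^ 2 * (z:ℂ) + (1/6) * m 1 ^ 3 * g 0 ^ 2 * (y:ℂ) ^ 3 + (1/6) * m 0 ^ 2 * g 1 ^ 3 * (z:ℂ) ^ 3 + (1/2) * m 0 ^ 2 * m 1 * g 1 ^ 2 * (y:ℂ) * (z:ℂ) ^ 2 + (1/2) * m 0 ^ 2 * m 1 ^ 2 * g 1 * (y:ℂ) ^ 2 * (z:ℂ) + (1/6) * m 0 ^ 2 * m 1 ^ 3 * (y:ℂ) ^ 3 + (1/2) * k 1 * g 0 ^ 2 * g 1 ^ 2 * (x:ℂ) * (z:ℂ) ^ 2 + k 1 * m 1 * g 0 ^ 2 * g 1 * (x:ℂ) * (y:ℂ) * (z:ℂ) + (1/2) * k 1 * m 1 ^ 2 * g 0 ^ 2 * (x:ℂ) * (y:ℂ) ^ 2 + (1/2) * k 1 * m 0 ^ 2 * g 1 ^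 2 * (x:ℂ) * (z:ℂ) ^ 2 + k 1 * m 0 ^ 2 * m 1 * g 1 * (x:ℂ) * (y:ℂ) * (z:ℂ) + (1/2) * k 1 * m 0 ^ 2 * m 1 ^ 2 * (x:ℂ) * (y:ℂ) ^ 2 + (1/2) * k 1 ^ 2 * g 0 ^ 2 * g 1 * (x:ℂ) ^ 2 * (z:ℂ) + (1/2) * k 1 ^ 2 * m 1 * g 0 ^ 2 * (x:ℂ) ^ 2 * (y:ℂ) + (1/2) * k 1 ^ 2 * m 0 ^ 2 * g 1 * (x:ℂ) ^ 2 * (z:ℂ) + (1/2) * k 1 ^ 2 * m 0 ^ 2 * m 1 * (x:ℂ) ^ 2 * (y:ℂ) + (1/6) * k 1 ^ 3 * g 0 ^ 2 * (x:ℂ) ^ 3 + (1/6) * k 1 ^ 3 * m 0 ^ 2 * (x:ℂ) ^ 3 + (1/6) * k 0 ^ 2 * g 1 ^ 3 * (z:ℂ) ^ 3 + (1/2) * k 0 ^ 2 * m 1 * g 1 ^ 2 * (y:ℂ) * (z:ℂ) ^ 2 + (1/2) * k 0 ^ 2 * m 1 ^ 2 * g 1 * (y:ℂ) ^ 2 *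 (z:ℂ) + (1/6) * k 0 ^ 2 * m 1 ^ 3 * (y:ℂ) ^ 3 + (1/2) * k 0 ^ 2 * k 1 * g 1 ^ 2 * (x:ℂ) * (z:ℂ) ^ 2 + k 0 ^ 2 * k 1 * m 1 * g 1 * (x:ℂ) * (y:ℂ) * (z:ℂ) + (1/2) * k 0 ^ 2 * k 1 * m 1 ^ 2 * (x:ℂ) * (y:ℂ) ^ 2 + (1/2) * k 0 ^ 2 * k 1 ^ 2 * g 1 * (x:ℂ) ^ 2 * (z:ℂ) + (1/2) * k 0 ^ 2 * k 1 ^ 2 * m 1 * (x:ℂ) ^ 2 * (y:ℂ) + (1/6) * k 0 ^ 2 * k 1 ^ 3 * (x:ℂ) ^ 3) * iteratedDeriv 7 F (k 0 * (x:ℂ) + m 0 * (y:ℂ) + g 0 * (z:ℂ))) * h00 +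
    ((4 * g 1 ^ 2 + 8 * g 0 * g 2 + 4 * m 1 ^ 2 + 8 * m 0 * m 2 + 4 * k 1 ^ 2 + 8 * k 0 * k 2) * iteratedDeriv 4 F (k 0 * (x:ℂ) + m 0 * (y:ℂ) + g 0 * (z:ℂ)) +
      (4 * g 0 * g 1 ^ 2 * (z:ℂ) + 4 * m 1 * g 0 * g 1 * (y:ℂ) + 4 * m 0 * m 1 * g 1 * (z:ℂ) + 4 * m 0 * m 1 ^ 2 * (y:ℂ) + 4 * k 1 * g 0 * g 1 * (x:ℂ) + 4 * k 1 * m 0 * m 1 * (x:ℂ) + 4 * k 0 * k 1 * g 1 * (z:ℂ) + 4 * k 0 * k 1 * m 1 * (y:ℂ) + 4 * k 0 * k 1 ^ 2 * (x:ℂ)) * iteratedDeriv 5 F (k 0 * (x:ℂ) + m 0 * (y:ℂ) + g 0 * (z:ℂ))) * h01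
end

section
/- Let k₀, m₀, k₁, m₁ ∈ ℂ with k₀² + m₀² ≠ 0, let g₀ = i·(k₀² + m₀²)^{1/2} and g₁ = i·(k₀³k₁ + m₀³m₁)/(2·((k₀² + m₀²)^{1/2})³), where (·)^{1/2} is a fixed complex square root. Then for every entire function F : ℂ → ℂ the function U₁(x,y,z) = (k₁x + m₁y + g₁z)·F(k₀x + m₀y + g₀z) satisfies the three-dimensional biharmonic equation Δ²U₁ = 0 at every point of ℝ³. -/
private lemma core_deriv (q r c e C D : ℂ) (G H : ℂ → ℂ)
    (hG : Differentiable ℂ G) (hH : Differentiable ℂ H) (t : ℝ) :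
    deriv (fun s : ℝ => q * G (c * s + C) + r * ((e * s + D) * H (c * s + C))) t
      = q * (c * deriv G (c * t + C))
        + r * (e * H (c * t + C) + (e * t + D) * (c * deriv H (c * t + C))) := by
  have hc : ∀ (J : ℂ → ℂ), Differentiable ℂ J →
      HasDerivAt (fun s : ℝ => J (c * s + C)) (c * deriv J (c * t + C)) t := by
    intro J hJ
    have h1 : HasDerivAt (fun w : ℂ => c * w + C) c (t : ℂ) := by
      simpa using ((hasDerivAt_id (t : ℂ)).const_mul c).add_const C
    have h2 := ((hJ (c * t + C)).hasDerivAt.comp (t : ℂ) h1).comp_ofReal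
    simpa [mul_comm] using h2
  have h2 : HasDerivAt (fun s : ℝ => e * (s : ℂ) + D) e t := by
    have h3 : HasDerivAt (fun w : ℂ => e * w + D) e (t : ℂ) := by
      simpa using ((hasDerivAt_id (t : ℂ)).const_mul e).add_const D
    exact h3.comp_ofReal
  have hA := (hc G hG).const_mul q
  have hB := (h2.mul (hc H hH)).const_mul r
  exact (hA.add hB).deriv

/-- Auxiliary family of functions closed under the partial derivatives. -/
noncomputable def SS (k₀ m₀ g₀ k₁ m₁ g₁ : ℂ) (F : ℂ → ℂ) (n : ℕ) (q r : ℂ) :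
    ℝ → ℝ → ℝ → ℂ :=
  fun x y z => q * iteratedDeriv n F (k₀ * x + m₀ * y + g₀ * z)
    + r * ((k₁ * x + m₁ * y + g₁ * z) * iteratedDeriv (n + 1) F (k₀ * x + m₀ * y + g₀ * z))

private lemma hd (F : ℂ → ℂ) (hF : Differentiable ℂ F) (n : ℕ) : Differentiable ℂ (iteratedDeriv n F) :=
  hF.contDiff.differentiable_iteratedDeriv n (by exact_mod_cast lt_top_iff_ne_top.2 (by simp))

private lemma pdx_SS (k₀ m₀ g₀ k₁ m₁ g₁ : ℂ) (F : ℂ → ℂ) (hF : Differentiable ℂ F) (n : ℕ) (q r : ℂ) :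
    pdx (SS k₀ m₀ g₀ k₁ m₁ g₁ F n q r)
      = SS k₀ m₀ g₀ k₁ m₁ g₁ F (n + 1) (q * k₀ + r * k₁) (r * k₀) := by
  funext x y z
  show deriv (fun s : ℝ => SS k₀ m₀ g₀ k₁ m₁ g₁ F n q r s y z) x = _
  have hfun : (fun s : ℝ => SS k₀ m₀ g₀ k₁ m₁ g₁ F n q r s y z)
      = fun s : ℝ => q * iteratedDeriv n F (k₀ * s + (m₀ * y + g₀ * z))
        + r * ((k₁ * s + (m₁ * y + g₁ * z)) *
            iteratedDeriv (n + 1) F (k₀ * s + (m₀ * y + g₀ * z))) := by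
    funext s; simp only [SS, add_assoc]
  rw [hfun, core_deriv q r k₀ k₁ (m₀ * y + g₀ * z) (m₁ * y + g₁ * z) _ _
    (hd F hF n) (hd F hF (n + 1)) x]
  simp only [SS, ← iteratedDeriv_succ, add_assoc]
  ring

private lemma pdy_SS (k₀ m₀ g₀ k₁ m₁ g₁ : ℂ) (F : ℂ → ℂ) (hF : Differentiable ℂ F) (n : ℕ) (q r : ℂ) :
    pdy (SS k₀ m₀ g₀ k₁ m₁ g₁ F n q r)
      = SS k₀ m₀ g₀ k₁ m₁ g₁ F (n + 1) (q * m₀ + r * m₁) (r * m₀) := by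
  funext x y z
  show deriv (fun s : ℝ => SS k₀ m₀ g₀ k₁ m₁ g₁ F n q r x s z) y = _
  have e1 : ∀ s : ℝ, k₀ * x + m₀ * s + g₀ * z = m₀ * s + (k₀ * x + g₀ * z) :=
    fun s => by ring
  have e2 : ∀ s : ℝ, k₁ * x + m₁ * s + g₁ * z = m₁ * s + (k₁ * x + g₁ * z) :=
    fun s => by ring
  have hfun : (fun s : ℝ => SS k₀ m₀ g₀ k₁ m₁ g₁ F n q r x s z)
      = fun s : ℝ => q * iteratedDeriv n F (m₀ * s + (k₀ * x + g₀ * z))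
        + r * ((m₁ * s + (k₁ * x + g₁ * z)) *
            iteratedDeriv (n + 1) F (m₀ * s + (k₀ * x + g₀ * z))) := by
    funext s; simp only [SS, e1, e2]
  rw [hfun, core_deriv q r m₀ m₁ (k₀ * x + g₀ * z) (k₁ * x + g₁ * z) _ _
    (hd F hF n) (hd F hF (n + 1)) y]
  simp only [SS, ← iteratedDeriv_succ, e1, e2]
  ring

private lemma pdz_SS (k₀ m₀ g₀ k₁ m₁ g₁ : ℂ) (F : ℂ → ℂ) (hF : Differentiable ℂ F) (n : ℕ) (q r : ℂ) :
    pdz (SS k₀ m₀ g₀ k₁ m₁ g₁ F n q r)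
      = SS k₀ m₀ g₀ k₁ m₁ g₁ F (n + 1) (q * g₀ + r * g₁) (r * g₀) := by
  funext x y z
  show deriv (fun s : ℝ => SS k₀ m₀ g₀ k₁ m₁ g₁ F n q r x y s) z = _
  have e1 : ∀ s : ℝ, k₀ * x + m₀ * y + g₀ * s = g₀ * s + (k₀ * x + m₀ * y) :=
    fun s => by ring
  have e2 : ∀ s : ℝ, k₁ * x + m₁ * y + g₁ * s = g₁ * s + (k₁ * x + m₁ * y) :=
    fun s => by ring
  have hfun : (fun s : ℝ => SS k₀ m₀ g₀ k₁ m₁ g₁ F n q r x y s)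
      = fun s : ℝ => q * iteratedDeriv n F (g₀ * s + (k₀ * x + m₀ * y))
        + r * ((g₁ * s + (k₁ * x + m₁ * y)) *
            iteratedDeriv (n + 1) F (g₀ * s + (k₀ * x + m₀ * y))) := by
    funext s; simp only [SS, e1, e2]
  rw [hfun, core_deriv q r g₀ g₁ (k₀ * x + m₀ * y) (k₁ * x + m₁ * y) _ _
    (hd F hF n) (hd F hF (n + 1)) z]
  simp only [SS, ← iteratedDeriv_succ, e1, e2]
  ring

private lemma pdx_U (k₀ m₀ g₀ k₁ m₁ g₁ : ℂ) (F : ℂ → ℂ) (hF : Differentiable ℂ F) :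
    pdx (fun x y z =>
      (k₁ * (x : ℂ) + m₁ * (y : ℂ) + g₁ * (z : ℂ)) *
        F (k₀ * (x : ℂ) + m₀ * (y : ℂ) + g₀ * (z : ℂ)))
      = SS k₀ m₀ g₀ k₁ m₁ g₁ F 0 k₁ k₀ := by
  funext x y z
  show deriv (fun s : ℝ =>
      (k₁ * (s : ℂ) + m₁ * (y : ℂ) + g₁ * (z : ℂ)) *
        F (k₀ * (s : ℂ) + m₀ * (y : ℂ) + g₀ * (z : ℂ))) x = _
  have hfun : (fun s : ℝ =>
      (k₁ * (s : ℂ) + m₁ * (y : ℂ) + g₁ * (z : ℂ)) *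
        F (k₀ * (s : ℂ) + m₀ * (y : ℂ) + g₀ * (z : ℂ)))
      = fun s : ℝ => (0 : ℂ) * F (k₀ * s + (m₀ * y + g₀ * z))
        + 1 * ((k₁ * s + (m₁ * y + g₁ * z)) * F (k₀ * s + (m₀ * y + g₀ * z))) := by
    funext s
    rw [add_assoc (k₀ * (s : ℂ)), add_assoc (k₁ * (s : ℂ))]
    ring
  rw [hfun, core_deriv 0 1 k₀ k₁ (m₀ * y + g₀ * z) (m₁ * y + g₁ * z) F F hF hF x]
  simp only [SS, zero_add, iteratedDeriv_zero, iteratedDeriv_one, add_assoc]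
  ring

private lemma pdy_U (k₀ m₀ g₀ k₁ m₁ g₁ : ℂ) (F : ℂ → ℂ) (hF : Differentiable ℂ F) :
    pdy (fun x y z =>
      (k₁ * (x : ℂ) + m₁ * (y : ℂ) + g₁ * (z : ℂ)) *
        F (k₀ * (x : ℂ) + m₀ * (y : ℂ) + g₀ * (z : ℂ)))
      = SS k₀ m₀ g₀ k₁ m₁ g₁ F 0 m₁ m₀ := by
  funext x y z
  show deriv (fun s : ℝ =>
      (k₁ * (x : ℂ) + m₁ * (s : ℂ) + g₁ * (z : ℂ)) *
        F (k₀ * (x : ℂ) + m₀ * (s : ℂ) + g₀ * (z : ℂ))) y = _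
  have hfun : (fun s : ℝ =>
      (k₁ * (x : ℂ) + m₁ * (s : ℂ) + g₁ * (z : ℂ)) *
        F (k₀ * (x : ℂ) + m₀ * (s : ℂ) + g₀ * (z : ℂ)))
      = fun s : ℝ => (0 : ℂ) * F (m₀ * s + (k₀ * x + g₀ * z))
        + 1 * ((m₁ * s + (k₁ * x + g₁ * z)) * F (m₀ * s + (k₀ * x + g₀ * z))) := by
    funext s
    rw [show k₀ * (x : ℂ) + m₀ * (s : ℂ) + g₀ * (z : ℂ) = m₀ * s + (k₀ * x + g₀ * z) from by ring,
      show k₁ * (x : ℂ) + m₁ * (s : ℂ) + g₁ * (z : ℂ) = m₁ * s + (k₁ * x + g₁ * z) from by ring]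
    ring
  rw [hfun, core_deriv 0 1 m₀ m₁ (k₀ * x + g₀ * z) (k₁ * x + g₁ * z) F F hF hF y]
  simp only [SS, zero_add, iteratedDeriv_zero, iteratedDeriv_one]
  rw [show k₀ * (x : ℂ) + m₀ * (y : ℂ) + g₀ * (z : ℂ) = m₀ * y + (k₀ * x + g₀ * z) from by ring,
    show k₁ * (x : ℂ) + m₁ * (y : ℂ) + g₁ * (z : ℂ) = m₁ * y + (k₁ * x + g₁ * z) from by ring]
  ring

private lemma pdz_U (k₀ m₀ g₀ k₁ m₁ g₁ : ℂ) (F : ℂ → ℂ) (hF : Differentiable ℂ F) :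
    pdz (fun x y z =>
      (k₁ * (x : ℂ) + m₁ * (y : ℂ) + g₁ * (z : ℂ)) *
        F (k₀ * (x : ℂ) + m₀ * (y : ℂ) + g₀ * (z : ℂ)))
      = SS k₀ m₀ g₀ k₁ m₁ g₁ F 0 g₁ g₀ := by
  funext x y z
  show deriv (fun s : ℝ =>
      (k₁ * (x : ℂ) + m₁ * (y : ℂ) + g₁ * (s : ℂ)) *
        F (k₀ * (x : ℂ) + m₀ * (y : ℂ) + g₀ * (s : ℂ))) z = _
  have hfun : (fun s : ℝ =>
      (k₁ * (x : ℂ) + m₁ * (y : ℂ) + g₁ * (s : ℂ)) *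
        F (k₀ * (x : ℂ) + m₀ * (y : ℂ) + g₀ * (s : ℂ)))
      = fun s : ℝ => (0 : ℂ) * F (g₀ * s + (k₀ * x + m₀ * y))
        + 1 * ((g₁ * s + (k₁ * x + m₁ * y)) * F (g₀ * s + (k₀ * x + m₀ * y))) := by
    funext s
    rw [show k₀ * (x : ℂ) + m₀ * (y : ℂ) + g₀ * (s : ℂ) = g₀ * s + (k₀ * x + m₀ * y) from by ring,
      show k₁ * (x : ℂ) + m₁ * (y : ℂ) + g₁ * (s : ℂ) = g₁ * s + (k₁ * x + m₁ * y) from by ring]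
    ring
  rw [hfun, core_deriv 0 1 g₀ g₁ (k₀ * x + m₀ * y) (k₁ * x + m₁ * y) F F hF hF z]
  simp only [SS, zero_add, iteratedDeriv_zero, iteratedDeriv_one]
  rw [show k₀ * (x : ℂ) + m₀ * (y : ℂ) + g₀ * (z : ℂ) = g₀ * z + (k₀ * x + m₀ * y) from by ring,
    show k₁ * (x : ℂ) + m₁ * (y : ℂ) + g₁ * (z : ℂ) = g₁ * z + (k₁ * x + m₁ * y) from by ring]
  ring

/-- With `k₀² + m₀² ≠ 0`, `s` a fixed complex square root of `k₀² + m₀²`,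
`g₀ = i·s` and `g₁ = i·(k₀³k₁ + m₀³m₁)/(2s³)`, for every entire `F` the function
`U₁(x,y,z) = (k₁x + m₁y + g₁z)·F(k₀x + m₀y + g₀z)` satisfies `Δ²U₁ = 0` everywhere on `ℝ³`. -/
theorem second_exact_solution (k₀ m₀ k₁ m₁ s g₀ g₁ : ℂ)
    (hne : k₀ ^ 2 + m₀ ^ 2 ≠ 0)
    (hs : s ^ 2 = k₀ ^ 2 + m₀ ^ 2)
    (hg0 : g₀ = Complex.I * s)
    (hg1 : g₁ = Complex.I * (k₀ ^ 3 * k₁ + m₀ ^ 3 * m₁) / (2 * s ^ 3))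
    (F : ℂ → ℂ) (hF : Differentiable ℂ F) (x y z : ℝ) :
    biharm (fun x y z =>
      (k₁ * (x : ℂ) + m₁ * (y : ℂ) + g₁ * (z : ℂ)) *
        F (k₀ * (x : ℂ) + m₀ * (y : ℂ) + g₀ * (z : ℂ))) x y z = 0 := by
  have h0 : k₀ ^ 2 + m₀ ^ 2 + g₀ ^ 2 = 0 := by
    rw [hg0, mul_pow, Complex.I_sq, hs]; ring
  simp only [biharm,
    pdx_U k₀ m₀ g₀ k₁ m₁ g₁ F hF, pdy_U k₀ m₀ g₀ k₁ m₁ g₁ F hF,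
    pdz_U k₀ m₀ g₀ k₁ m₁ g₁ F hF,
    pdx_SS k₀ m₀ g₀ k₁ m₁ g₁ F hF, pdy_SS k₀ m₀ g₀ k₁ m₁ g₁ F hF,
    pdz_SS k₀ m₀ g₀ k₁ m₁ g₁ F hF]
  simp only [SS]
  linear_combination
    (4 * (k₀ * k₁ + m₀ * m₁ + g₀ * g₁) *
        iteratedDeriv (0 + 1 + 1 + 1) F (k₀ * (x : ℂ) + m₀ * (y : ℂ) + g₀ * (z : ℂ)) +
      (k₀ ^ 2 + m₀ ^ 2 + g₀ ^ 2) *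
        ((k₁ * (x : ℂ) + m₁ * (y : ℂ) + g₁ * (z : ℂ)) *
          iteratedDeriv (0 + 1 + 1 + 1 + 1) F
            (k₀ * (x : ℂ) + m₀ * (y : ℂ) + g₀ * (z : ℂ)))) * h0
end
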